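/- Let n ∈ ℕ and let f_1, …, f_n : [0,1] → ℂ be Hölder continuous with exponent 1/2. Then there do not exist functions F_1, …, F_n ∈ L²([0,1]², Lebesgue measure) such that Σ_{k=1}^n (f_k(x) − f_k(y)) F_k(x,y) = 1 for Lebesgue-almost every (x,y) ∈ [0,1]². -/

import Mathlib

open MeasureTheory Filter
open scoped ENNReal Topology
private lemma measA (δ : ℝ) : MeasurableSet {p : ℝ × ℝ | |p.1 - p.2| ≤ δ} :=
  (isClosed_le (by fun_prop) continuous_const).measurableSet

private lemma mu_lower {δ : ℝ} (h0 : 0 < δ) (h1 : δ ≤ 1/2) :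
    ENNReal.ofReal δ ≤
      ((volume.restrict (Set.Icc (0:ℝ) 1)).prod (volume.restrict (Set.Icc (0:ℝ) 1)))
        {p : ℝ × ℝ | |p.1 - p.2| ≤ δ} := by
  rw [Measure.prod_apply (measA δ)]
  have hslice : ∀ x ∈ Set.Icc (0:ℝ) 1,
      ENNReal.ofReal δ ≤ (volume.restrict (Set.Icc (0:ℝ) 1))
        (Prod.mk x ⁻¹' {p : ℝ × ℝ | |p.1 - p.2| ≤ δ}) := by
    intro x hx
    obtain ⟨hx0, hx1⟩ := hx
    set a : ℝ := if x ≤ 1/2 then x else x - δ with ha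
    have hsub : Set.Icc a (a + δ) ⊆
        (Prod.mk x ⁻¹' {p : ℝ × ℝ | |p.1 - p.2| ≤ δ}) ∩ Set.Icc (0:ℝ) 1 := by
      intro y hy
      obtain ⟨hy1, hy2⟩ := hy
      constructor
      · simp only [Set.mem_preimage, Set.mem_setOf_eq]
        rw [abs_le]
        rw [ha] at hy1 hy2
        split_ifs at hy1 hy2 <;> constructor <;> linarith
      · rw [ha] at hy1 hy2
        constructor <;> (split_ifs at hy1 hy2 <;> linarith)
    calc ENNReal.ofReal δ = volume (Set.Icc a (a + δ)) := by
          rw [Real.volume_Icc]; ring_nf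
      _ ≤ _ := by
          rw [Measure.restrict_apply (measurableSet_preimage
            (measurable_prodMk_left) (measA δ))]
          exact measure_mono hsub
  calc ENNReal.ofReal δ
      = ∫⁻ _, ENNReal.ofReal δ ∂(volume.restrict (Set.Icc (0:ℝ) 1)) := by
        rw [lintegral_const, Measure.restrict_apply_univ, Real.volume_Icc]; norm_num
    _ ≤ _ := lintegral_mono_ae
        ((ae_restrict_mem measurableSet_Icc).mono fun x hx => hslice x hx)

private lemma mu_diag :
    ((volume.restrict (Set.Icc (0:ℝ) 1)).prod (volume.restrict (Set.Icc (0:ℝ) 1)))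
      {p : ℝ × ℝ | p.1 = p.2} = 0 := by
  have hm : MeasurableSet {p : ℝ × ℝ | p.1 = p.2} :=
    (isClosed_eq continuous_fst continuous_snd).measurableSet
  rw [Measure.prod_apply hm]
  have : ∀ x : ℝ, (volume.restrict (Set.Icc (0:ℝ) 1))
      (Prod.mk x ⁻¹' {p : ℝ × ℝ | p.1 = p.2}) = 0 := by
    intro x
    have : Prod.mk x ⁻¹' {p : ℝ × ℝ | p.1 = p.2} = {x} := by
      ext y; simp [eq_comm]
    rw [this]
    exact le_antisymm (((Measure.restrict_le_self) _).trans_eq Real.volume_singleton) (zero_le)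
  simp [this]
private lemma key_ineq
    {n : ℕ} {f : Fin n → ℝ → ℂ} {C : Fin n → ℝ}
    (hC : ∀ k, ∀ x ∈ Set.Icc (0:ℝ) 1, ∀ y ∈ Set.Icc (0:ℝ) 1,
      ‖f k x - f k y‖ ≤ C k * |x - y| ^ ((1:ℝ)/2))
    (hC0 : ∀ k, 0 ≤ C k)
    {F : Fin n → ℝ × ℝ → ℂ}
    (hF : ∀ k, MemLp (F k) 2
      ((volume.restrict (Set.Icc (0:ℝ) 1)).prod (volume.restrict (Set.Icc (0:ℝ) 1))))
    (hae : ∀ᵐ p ∂((volume.restrict (Set.Icc (0:ℝ) 1)).prod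
        (volume.restrict (Set.Icc (0:ℝ) 1))),
      ∑ k, (f k p.1 - f k p.2) * F k p = 1)
    {δ : ℝ} (h0 : 0 < δ) (h1 : δ ≤ 1/2) :
    1 ≤ ∑ k, ENNReal.ofReal (C k) *
      (∫⁻ p in {p : ℝ × ℝ | |p.1 - p.2| ≤ δ}, (‖F k p‖₊ : ℝ≥0∞) ^ (2:ℝ)
        ∂((volume.restrict (Set.Icc (0:ℝ) 1)).prod
          (volume.restrict (Set.Icc (0:ℝ) 1)))) ^ ((1:ℝ)/2) := by
  set I : Set ℝ := Set.Icc (0:ℝ) 1 with hI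
  set μ : Measure (ℝ × ℝ) := (volume.restrict I).prod (volume.restrict I) with hμdef
  set A : Set (ℝ × ℝ) := {p : ℝ × ℝ | |p.1 - p.2| ≤ δ} with hAdef
  set ρ : Measure (ℝ × ℝ) := μ.restrict A with hρdef
  have hμA_le : μ A ≤ 1 := by
    have huniv : μ Set.univ = 1 := by
      rw [hμdef, ← Set.univ_prod_univ, Measure.prod_prod]
      simp [hI, Real.volume_Icc]
    exact (measure_mono (Set.subset_univ _)).trans huniv.le
  have hμA_ne_top : μ A ≠ ∞ := (hμA_le.trans_lt ENNReal.one_lt_top).ne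
  have hlow : ENNReal.ofReal δ ≤ μ A := mu_lower h0 h1
  have hμA_ne0 : μ A ≠ 0 := by
    intro h
    rw [h, nonpos_iff_eq_zero, ENNReal.ofReal_eq_zero] at hlow
    linarith
  have hmeas : ∀ k, AEMeasurable (fun p => (‖F k p‖₊ : ℝ≥0∞)) ρ :=
    fun k => ((hF k).aestronglyMeasurable.restrict).enorm
  -- a.e. facts
  have hmem : ∀ᵐ p ∂μ, p ∈ I ×ˢ I := by
    rw [hμdef, Measure.prod_restrict]
    exact ae_restrict_mem (measurableSet_Icc.prod measurableSet_Icc)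
  have haeρ : ∀ᵐ p ∂ρ, ∑ k, (f k p.1 - f k p.2) * F k p = 1 := ae_restrict_of_ae hae
  have hmemρ : ∀ᵐ p ∂ρ, p ∈ I ×ˢ I := ae_restrict_of_ae hmem
  have hAρ : ∀ᵐ p ∂ρ, p ∈ A := ae_restrict_mem (measA δ)
  -- pointwise bound
  have hpt : ∀ᵐ p ∂ρ, (1:ℝ≥0∞) ≤
      ∑ k, ENNReal.ofReal (C k * δ ^ ((1:ℝ)/2)) * (‖F k p‖₊ : ℝ≥0∞) := by
    filter_upwards [haeρ, hmemρ, hAρ] with p h1p h2p h3p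
    calc (1:ℝ≥0∞) = (‖∑ k, (f k p.1 - f k p.2) * F k p‖₊ : ℝ≥0∞) := by
          rw [h1p]; simp
      _ ≤ ∑ k, (‖(f k p.1 - f k p.2) * F k p‖₊ : ℝ≥0∞) := by
          rw [← ENNReal.coe_finset_sum]
          exact_mod_cast nnnorm_sum_le Finset.univ fun k => (f k p.1 - f k p.2) * F k p
      _ ≤ ∑ k, ENNReal.ofReal (C k * δ ^ ((1:ℝ)/2)) * (‖F k p‖₊ : ℝ≥0∞) := by
          refine Finset.sum_le_sum fun k _ => ?_
          rw [nnnorm_mul, ENNReal.coe_mul]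
          gcongr
          rw [← enorm_eq_nnnorm, ← ofReal_norm]
          refine ENNReal.ofReal_le_ofReal ?_
          calc ‖f k p.1 - f k p.2‖ ≤ C k * |p.1 - p.2| ^ ((1:ℝ)/2) :=
                hC k p.1 h2p.1 p.2 h2p.2
            _ ≤ C k * δ ^ ((1:ℝ)/2) := by
                have h3p' : |p.1 - p.2| ≤ δ := h3p
                have := Real.rpow_le_rpow (abs_nonneg _) h3p' (by norm_num : (0:ℝ) ≤ 1/2)
                exact mul_le_mul_of_nonneg_left this (hC0 k)
  have step1 : μ A ≤ ∑ k, ENNReal.ofReal (C k * δ ^ ((1:ℝ)/2)) *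
      ∫⁻ p, (‖F k p‖₊ : ℝ≥0∞) ∂ρ := by
    calc μ A = ∫⁻ _, (1:ℝ≥0∞) ∂ρ := by rw [lintegral_one, hρdef, Measure.restrict_apply_univ]
      _ ≤ ∫⁻ p, ∑ k, ENNReal.ofReal (C k * δ ^ ((1:ℝ)/2)) * (‖F k p‖₊ : ℝ≥0∞) ∂ρ :=
          lintegral_mono_ae hpt
      _ = ∑ k, ∫⁻ p, ENNReal.ofReal (C k * δ ^ ((1:ℝ)/2)) * (‖F k p‖₊ : ℝ≥0∞) ∂ρ :=
          lintegral_finset_sum' _ fun k _ => (hmeas k).const_mul _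
      _ = _ := Finset.sum_congr rfl fun k _ => lintegral_const_mul'' _ (hmeas k)
  have holder : ∀ k, ∫⁻ p, (‖F k p‖₊ : ℝ≥0∞) ∂ρ ≤
      (∫⁻ p, (‖F k p‖₊ : ℝ≥0∞) ^ (2:ℝ) ∂ρ) ^ ((1:ℝ)/2) * (μ A) ^ ((1:ℝ)/2) := by
    intro k
    have hconj : Real.HolderConjugate 2 2 := Real.HolderConjugate.two_two
    have := ENNReal.lintegral_mul_le_Lp_mul_Lq ρ hconj (hmeas k)
      (aemeasurable_const (b := (1:ℝ≥0∞)))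
    simpa [lintegral_one, hρdef, Measure.restrict_apply_univ] using this
  set S : ℝ≥0∞ := ∑ k, ENNReal.ofReal (C k) *
      (∫⁻ p, (‖F k p‖₊ : ℝ≥0∞) ^ (2:ℝ) ∂ρ) ^ ((1:ℝ)/2) with hSdef
  have step2 : μ A ≤ ENNReal.ofReal (δ ^ ((1:ℝ)/2)) * S * (μ A) ^ ((1:ℝ)/2) := by
    refine step1.trans ?_
    rw [hSdef, Finset.mul_sum, Finset.sum_mul]
    refine Finset.sum_le_sum fun k _ => ?_
    calc ENNReal.ofReal (C k * δ ^ ((1:ℝ)/2)) * ∫⁻ p, (‖F k p‖₊ : ℝ≥0∞) ∂ρ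
        ≤ ENNReal.ofReal (C k * δ ^ ((1:ℝ)/2)) *
          ((∫⁻ p, (‖F k p‖₊ : ℝ≥0∞) ^ (2:ℝ) ∂ρ) ^ ((1:ℝ)/2) * (μ A) ^ ((1:ℝ)/2)) := by
          gcongr
          exact holder k
      _ = ENNReal.ofReal (δ ^ ((1:ℝ)/2)) *
          (ENNReal.ofReal (C k) * (∫⁻ p, (‖F k p‖₊ : ℝ≥0∞) ^ (2:ℝ) ∂ρ) ^ ((1:ℝ)/2)) *
          (μ A) ^ ((1:ℝ)/2) := by
          rw [ENNReal.ofReal_mul (hC0 k)]; ring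
  have hhalf_ne0 : (μ A) ^ ((1:ℝ)/2) ≠ 0 :=
    (ENNReal.rpow_pos (pos_iff_ne_zero.mpr hμA_ne0) hμA_ne_top).ne'
  have hhalf_ne_top : (μ A) ^ ((1:ℝ)/2) ≠ ∞ :=
    ENNReal.rpow_ne_top_of_nonneg (by norm_num) hμA_ne_top
  have c1 : (μ A) ^ ((1:ℝ)/2) ≤ ENNReal.ofReal (δ ^ ((1:ℝ)/2)) * S := by
    have hrw : μ A = (μ A) ^ ((1:ℝ)/2) * (μ A) ^ ((1:ℝ)/2) := by
      rw [← ENNReal.rpow_add _ _ hμA_ne0 hμA_ne_top]; norm_num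
    nth_rewrite 1 [hrw] at step2
    exact (ENNReal.mul_le_mul_iff_left hhalf_ne0 hhalf_ne_top).mp step2
  have c2 : ENNReal.ofReal (δ ^ ((1:ℝ)/2)) ≤ (μ A) ^ ((1:ℝ)/2) := by
    rw [← ENNReal.ofReal_rpow_of_pos h0]
    exact ENNReal.rpow_le_rpow hlow (by norm_num)
  have hofR_ne0 : ENNReal.ofReal (δ ^ ((1:ℝ)/2)) ≠ 0 :=
    (ENNReal.ofReal_pos.mpr (Real.rpow_pos_of_pos h0 _)).ne'
  have c3 : ENNReal.ofReal (δ ^ ((1:ℝ)/2)) * 1 ≤ ENNReal.ofReal (δ ^ ((1:ℝ)/2)) * S := by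
    rw [mul_one]; exact c2.trans c1
  exact (ENNReal.mul_le_mul_iff_right hofR_ne0 ENNReal.ofReal_ne_top).mp c3

/-- If `f₁, …, fₙ : [0,1] → ℂ` are Hölder continuous with exponent `1/2`, then there are no
`F₁, …, Fₙ ∈ L²([0,1]²)` with `∑ k (f k x - f k y) * F k (x,y) = 1` almost everywhere. -/
theorem no_L2_solution_of_lipHalf
    (n : ℕ) (f : Fin n → ℝ → ℂ)
    (hf : ∀ k, ∃ C : ℝ, ∀ x ∈ Set.Icc (0 : ℝ) 1, ∀ y ∈ Set.Icc (0 : ℝ) 1,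
      ‖f k x - f k y‖ ≤ C * |x - y| ^ ((1 : ℝ) / 2)) :
    ¬ ∃ F : Fin n → ℝ × ℝ → ℂ,
      (∀ k, MemLp (F k) 2
        ((volume.restrict (Set.Icc (0 : ℝ) 1)).prod (volume.restrict (Set.Icc (0 : ℝ) 1)))) ∧
      (∀ᵐ p ∂((volume.restrict (Set.Icc (0 : ℝ) 1)).prod
          (volume.restrict (Set.Icc (0 : ℝ) 1))),
        ∑ k, (f k p.1 - f k p.2) * F k p = 1) := by
  rintro ⟨F, hF2, hae⟩
  choose C hC using hf
  have hC0 : ∀ k, 0 ≤ C k := by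
    intro k
    have h := hC k 0 (by norm_num) 1 (by norm_num)
    have h1 : |(0:ℝ) - 1| ^ ((1:ℝ)/2) = 1 := by norm_num
    rw [h1, mul_one] at h
    exact le_trans (norm_nonneg _) h
  set μ : Measure (ℝ × ℝ) :=
    (volume.restrict (Set.Icc (0:ℝ) 1)).prod (volume.restrict (Set.Icc (0:ℝ) 1)) with hμdef
  set ν : Fin n → Measure (ℝ × ℝ) :=
    fun k => μ.withDensity (fun p => (‖F k p‖₊ : ℝ≥0∞) ^ (2:ℝ)) with hνdef
  have hνA : ∀ k (δ : ℝ), ν k {p : ℝ × ℝ | |p.1 - p.2| ≤ δ} =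
      ∫⁻ p in {p : ℝ × ℝ | |p.1 - p.2| ≤ δ}, (‖F k p‖₊ : ℝ≥0∞) ^ (2:ℝ) ∂μ :=
    fun k δ => withDensity_apply _ (measA δ)
  have hνfin : ∀ k, ν k Set.univ ≠ ∞ := by
    intro k
    rw [hνdef]
    simp only [withDensity_apply _ MeasurableSet.univ, Measure.restrict_univ]
    have := lintegral_rpow_enorm_lt_top_of_eLpNorm_lt_top (f := F k) (μ := μ)
      (p := 2) (by norm_num) (by norm_num) (hF2 k).2
    simpa [enorm_eq_nnnorm] using this.ne
  -- the shrinking sequence of strips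
  set δs : ℕ → ℝ := fun m => 1 / ((m:ℝ) + 2) with hδs
  have hδ0 : ∀ m, 0 < δs m := fun m => by positivity
  have hδhalf : ∀ m, δs m ≤ 1/2 := by
    intro m
    rw [hδs]
    apply div_le_div_of_nonneg_left (by norm_num) (by norm_num)
    · have : (0:ℝ) ≤ (m:ℝ) := Nat.cast_nonneg m
      linarith
  have hδanti : Antitone δs := by
    intro a b hab
    apply div_le_div_of_nonneg_left (by norm_num) (by positivity)
    have : (a:ℝ) ≤ (b:ℝ) := Nat.cast_le.mpr hab
    linarith
  have hanti : Antitone fun m => {p : ℝ × ℝ | |p.1 - p.2| ≤ δs m} := by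
    intro a b hab p hp
    exact le_trans hp (hδanti hab)
  have hiInter : (⋂ m, {p : ℝ × ℝ | |p.1 - p.2| ≤ δs m}) = {p : ℝ × ℝ | p.1 = p.2} := by
    ext p
    simp only [Set.mem_iInter, Set.mem_setOf_eq]
    constructor
    · intro h
      by_contra hne
      have habs : 0 < |p.1 - p.2| := abs_pos.mpr (sub_ne_zero.mpr hne)
      obtain ⟨m, hm⟩ := exists_nat_one_div_lt habs
      have h2 : (1:ℝ) / ((m:ℝ) + 2) ≤ 1 / ((m:ℝ) + 1) := by
        apply div_le_div_of_nonneg_left (by norm_num) (by positivity)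
        linarith
      have := h m
      rw [hδs] at this
      linarith
    · intro h m
      rw [h]
      simp [le_of_lt (hδ0 m)]
  have htend : ∀ k, Tendsto (fun m => ν k {p : ℝ × ℝ | |p.1 - p.2| ≤ δs m}) atTop (𝓝 0) := by
    intro k
    have h := tendsto_measure_iInter_atTop (μ := ν k)
      (fun m => (measA (δs m)).nullMeasurableSet) hanti
      ⟨0, ((measure_mono (Set.subset_univ _)).trans_lt
        (lt_top_iff_ne_top.mpr (hνfin k))).ne⟩
    rw [hiInter] at h
    have hdiag : ν k {p : ℝ × ℝ | p.1 = p.2} = 0 :=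
      (withDensity_absolutelyContinuous μ _) mu_diag
    rw [hdiag] at h
    exact h
  have hS : Tendsto (fun m => ∑ k, ENNReal.ofReal (C k) *
      (ν k {p : ℝ × ℝ | |p.1 - p.2| ≤ δs m}) ^ ((1:ℝ)/2)) atTop (𝓝 0) := by
    have h := tendsto_finset_sum (Finset.univ : Finset (Fin n)) fun k _ =>
      ENNReal.Tendsto.const_mul (a := ENNReal.ofReal (C k))
        ((htend k).ennrpow_const ((1:ℝ)/2)) (Or.inr ENNReal.ofReal_ne_top)
    simpa [ENNReal.zero_rpow_of_pos] using h
  have hev := hS.eventually_lt_const (by norm_num : (0:ℝ≥0∞) < 1)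
  obtain ⟨m, hm⟩ := hev.exists
  have hkey := key_ineq hC hC0 hF2 hae (hδ0 m) (hδhalf m)
  rw [show (∑ k, ENNReal.ofReal (C k) *
      (∫⁻ p in {p : ℝ × ℝ | |p.1 - p.2| ≤ δs m}, (‖F k p‖₊ : ℝ≥0∞) ^ (2:ℝ) ∂μ) ^ ((1:ℝ)/2))
      = ∑ k, ENNReal.ofReal (C k) *
      (ν k {p : ℝ × ℝ | |p.1 - p.2| ≤ δs m}) ^ ((1:ℝ)/2) from
    Finset.sum_congr rfl fun k _ => by rw [hνA]] at hkey
  exact absurd hkey (not_le.mpr hm)
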